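/- arXiv:2402.16477 — 3 statements merged into one kernel-verified Lean document; each statement's English description precedes it below -/
import Mathlib

section
/- Let Φ(ρ) = Σ_{k} a_k U_k ρ U_k† be a mixed-unitary channel where each U_k is an isometry of the metric d and a_k ≥ 0, Σ_k a_k = 1. Then for all 1 ≤ p ≤ ∞ and all density operators ρ, σ: W_p^d(Φ(ρ), Φ(σ)) ≤ W_p^d(ρ,σ). -/
open scoped BigOperators ComplexOrder
open Matrix

noncomputable section

abbrev QV (D : ℕ) := EuclideanSpace ℂ (Fin D)

def qproj {D : ℕ} (ψ : QV D) : Matrix (Fin D) (Fin D) ℂ :=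
  Matrix.of fun i j => ψ i * (starRingEnd ℂ) (ψ j)

/-- A quantum transport plan between `ρ` and `σ`. -/
structure TPlan (D : ℕ) (ρ σ : Matrix (Fin D) (Fin D) ℂ) where
  n : ℕ
  q : Fin n → ℝ
  ψ : Fin n → QV D
  φ : Fin n → QV D
  q_pos : ∀ j, 0 < q j
  ψ_unit : ∀ j, ‖ψ j‖ = 1
  φ_unit : ∀ j, ‖φ j‖ = 1
  margL : ∑ j, (q j : ℂ) • qproj (ψ j) = ρ
  margR : ∑ j, (q j : ℂ) • qproj (φ j) = σ

/-- p-th order transport cost of a plan (before the 1/p root). -/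
def Tcost {D : ℕ} (d : QV D → QV D → ℝ) (p : ℝ) {ρ σ : Matrix (Fin D) (Fin D) ℂ}
    (Q : TPlan D ρ σ) : ℝ :=
  ∑ j, Q.q j * d (Q.ψ j) (Q.φ j) ^ p

/-- The order-p quantum Wasserstein distance. -/
def Wp {D : ℕ} (d : QV D → QV D → ℝ) (p : ℝ) (ρ σ : Matrix (Fin D) (Fin D) ℂ) : ℝ :=
  sInf { x | ∃ Q : TPlan D ρ σ, x = (Tcost d p Q) ^ (1/p) }

/-- The infinite-order quantum Wasserstein distance. -/
def Winf {D : ℕ} (d : QV D → QV D → ℝ) (ρ σ : Matrix (Fin D) (Fin D) ℂ) : ℝ :=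
  sInf { x | ∃ Q : TPlan D ρ σ, x = ⨆ j, d (Q.ψ j) (Q.φ j) }

def IsDensity {D : ℕ} (ρ : Matrix (Fin D) (Fin D) ℂ) : Prop :=
  ρ.PosSemidef ∧ ρ.trace = 1

/-- Hilbert–Schmidt (Frobenius) norm. -/
def frob {D : ℕ} (A : Matrix (Fin D) (Fin D) ℂ) : ℝ :=
  Real.sqrt (∑ i, ∑ j, ‖A i j‖ ^ 2)

/-- Action of a matrix on a vector of the Euclidean space. -/
def act {D : ℕ} (U : Matrix (Fin D) (Fin D) ℂ) (ψ : QV D) : QV D :=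
  (EuclideanSpace.equiv (Fin D) ℂ).symm (U.mulVec (EuclideanSpace.equiv (Fin D) ℂ ψ))

/-- Dual Lipschitz constant of an observable. -/
def Ld {D : ℕ} (d : QV D → QV D → ℝ) (O : Matrix (Fin D) (Fin D) ℂ) : ℝ :=
  sSup { x | ∃ ρ σ : Matrix (Fin D) (Fin D) ℂ, IsDensity ρ ∧ IsDensity σ ∧ ρ ≠ σ ∧
    x = ((O * (ρ - σ)).trace).re / Wp d 1 ρ σ }

/-- Double-dual norm. -/
def DWnorm {D : ℕ} (d : QV D → QV D → ℝ) (X : Matrix (Fin D) (Fin D) ℂ) : ℝ :=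
  sSup { x | ∃ O : Matrix (Fin D) (Fin D) ℂ, O.IsHermitian ∧ O.trace = 0 ∧ Ld d O ≤ 1 ∧
    x = ((O * X).trace).re }

/-- Trace (nuclear) norm. -/
def traceNorm {D : ℕ} (A : Matrix (Fin D) (Fin D) ℂ) : ℝ :=
  (let hA := (Matrix.posSemidef_conjTranspose_mul_self A).1;
    (hA.eigenvectorUnitary : Matrix (Fin D) (Fin D) ℂ) *
      diagonal (fun i => ((Real.sqrt (hA.eigenvalues i) : ℝ) : ℂ)) *
      (star hA.eigenvectorUnitary : Matrix (Fin D) (Fin D) ℂ)).trace.re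

-- Auxiliary lemmas ------------------------------------------------------

lemma qproj_act {D : ℕ} (M : Matrix (Fin D) (Fin D) ℂ) (ψ : QV D) :
    qproj (act M ψ) = M * qproj ψ * Mᴴ := by
  ext i j
  show (M.mulVec ψ i) * (starRingEnd ℂ) (M.mulVec ψ j) = _
  simp only [Matrix.mul_apply, Matrix.mulVec, dotProduct, qproj, Matrix.of_apply,
    Matrix.conjTranspose_apply, map_sum, _root_.map_mul, Finset.sum_mul, Finset.mul_sum,
    Complex.star_def]
  refine Finset.sum_congr rfl fun l _ => Finset.sum_congr rfl fun m _ => by ring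

lemma norm_act {D : ℕ} {M : Matrix (Fin D) (Fin D) ℂ} (hM : M ∈ Matrix.unitaryGroup (Fin D) ℂ)
    (ψ : QV D) : ‖act M ψ‖ = ‖ψ‖ := by
  have hMU : Mᴴ * M = 1 := by
    have h := hM.1; rwa [Matrix.star_eq_conjTranspose] at h
  have h1 : star (M.mulVec ψ) ⬝ᵥ (M.mulVec ψ) = star (ψ : Fin D → ℂ) ⬝ᵥ (ψ : Fin D → ℂ) := by
    rw [Matrix.star_mulVec, Matrix.dotProduct_mulVec, Matrix.vecMul_vecMul, hMU]
    simp
  have h2 : ∀ v : QV D, ‖v‖ = Real.sqrt (Complex.re (star (v : Fin D → ℂ) ⬝ᵥ (v : Fin D → ℂ))) := by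
    intro v
    rw [EuclideanSpace.norm_eq]
    congr 1
    simp only [dotProduct, Pi.star_apply, Complex.star_def, Complex.re_sum]
    refine Finset.sum_congr rfl fun i _ => ?_
    rw [mul_comm, Complex.mul_conj]
    simp [Complex.normSq_eq_norm_sq, ← Complex.ofReal_pow]
  rw [h2, h2]
  show Real.sqrt (Complex.re (star (M.mulVec ψ) ⬝ᵥ (M.mulVec ψ))) = _
  rw [h1]

lemma density_sum {D : ℕ} {ρ : Matrix (Fin D) (Fin D) ℂ} (h : ρ.IsHermitian) :
    ∑ k, (h.eigenvalues k : ℂ) • qproj (h.eigenvectorBasis k) = ρ := by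
  conv_rhs => rw [h.spectral_theorem, Unitary.conjStarAlgAut_apply]
  ext i j
  simp only [Matrix.sum_apply, Matrix.smul_apply, qproj, Matrix.of_apply, smul_eq_mul,
    Matrix.mul_apply, Matrix.diagonal_apply, Function.comp_apply, Matrix.star_apply,
    Complex.star_def, Matrix.IsHermitian.eigenvectorUnitary_apply]
  simp only [mul_ite, mul_zero, Finset.sum_ite_eq', Finset.mem_univ, if_true]
  exact Finset.sum_congr rfl fun k _ => (mul_left_comm _ _ _).trans (mul_assoc _ _ _).symm

lemma trace_qproj {D : ℕ} {ψ : QV D} (hψ : ‖ψ‖ = 1) : (qproj ψ).trace = 1 := by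
  have h : ∑ i, ‖ψ i‖ ^ 2 = 1 := by
    have := EuclideanSpace.norm_eq ψ
    rw [hψ] at this
    have h2 : (0:ℝ) ≤ ∑ i, ‖ψ i‖ ^ 2 := Finset.sum_nonneg fun i _ => sq_nonneg _
    nlinarith [Real.sq_sqrt h2, Real.sqrt_nonneg (∑ i, ‖ψ i‖ ^ 2)]
  have : (qproj ψ).trace = ((∑ i, ‖ψ i‖ ^ 2 : ℝ) : ℂ) := by
    simp only [Matrix.trace, Matrix.diag_apply, qproj, Matrix.of_apply, Complex.ofReal_sum]
    refine Finset.sum_congr rfl fun i _ => ?_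
    rw [Complex.mul_conj]
    simp [Complex.normSq_eq_norm_sq, ← Complex.ofReal_pow]
  rw [this, h, Complex.ofReal_one]

lemma sum_pos_subtype {α M : Type*} [Fintype α] [AddCommMonoid M] (w : α → ℝ) (F : α → M)
    (h0 : ∀ i, ¬ 0 < w i → F i = 0) :
    ∑ i : {i // 0 < w i}, F i.1 = ∑ i, F i := by
  classical
  rw [← Finset.sum_subtype (Finset.univ.filter fun i => 0 < w i)
    (fun x => by simp) F, Finset.sum_filter]
  exact Finset.sum_congr rfl fun i _ => by by_cases h : 0 < w i <;> simp [h, h0]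

/-- Build a transport plan from data indexed by an arbitrary fintype. -/
def TPlan.ofIndex {D : ℕ} {ρ σ : Matrix (Fin D) (Fin D) ℂ} {ι : Type} [Fintype ι]
    (q : ι → ℝ) (ψ φ : ι → QV D) (hq : ∀ j, 0 < q j)
    (hψ : ∀ j, ‖ψ j‖ = 1) (hφ : ∀ j, ‖φ j‖ = 1)
    (hL : ∑ j, (q j : ℂ) • qproj (ψ j) = ρ)
    (hR : ∑ j, (q j : ℂ) • qproj (φ j) = σ) : TPlan D ρ σ where
  n := Fintype.card ι
  q := q ∘ (Fintype.equivFin ι).symm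
  ψ := ψ ∘ (Fintype.equivFin ι).symm
  φ := φ ∘ (Fintype.equivFin ι).symm
  q_pos j := hq _
  ψ_unit j := hψ _
  φ_unit j := hφ _
  margL := by
    rw [← hL]
    exact Equiv.sum_comp (Fintype.equivFin ι).symm (fun j => (q j : ℂ) • qproj (ψ j))
  margR := by
    rw [← hR]
    exact Equiv.sum_comp (Fintype.equivFin ι).symm (fun j => (q j : ℂ) • qproj (φ j))

lemma Tcost_ofIndex {D : ℕ} (d : QV D → QV D → ℝ) (p : ℝ)
    {ρ σ : Matrix (Fin D) (Fin D) ℂ} {ι : Type} [Fintype ι]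
    (q : ι → ℝ) (ψ φ : ι → QV D) (hq : ∀ j, 0 < q j)
    (hψ : ∀ j, ‖ψ j‖ = 1) (hφ : ∀ j, ‖φ j‖ = 1)
    (hL : ∑ j, (q j : ℂ) • qproj (ψ j) = ρ)
    (hR : ∑ j, (q j : ℂ) • qproj (φ j) = σ) :
    Tcost d p (TPlan.ofIndex q ψ φ hq hψ hφ hL hR) = ∑ j, q j * d (ψ j) (φ j) ^ p :=
  Equiv.sum_comp (Fintype.equivFin ι).symm (fun j => q j * d (ψ j) (φ j) ^ p)

lemma iSup_ofIndex {D : ℕ} (d : QV D → QV D → ℝ)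
    {ρ σ : Matrix (Fin D) (Fin D) ℂ} {ι : Type} [Fintype ι]
    (q : ι → ℝ) (ψ φ : ι → QV D) (hq : ∀ j, 0 < q j)
    (hψ : ∀ j, ‖ψ j‖ = 1) (hφ : ∀ j, ‖φ j‖ = 1)
    (hL : ∑ j, (q j : ℂ) • qproj (ψ j) = ρ)
    (hR : ∑ j, (q j : ℂ) • qproj (φ j) = σ) :
    (⨆ j, d ((TPlan.ofIndex q ψ φ hq hψ hφ hL hR).ψ j)
        ((TPlan.ofIndex q ψ φ hq hψ hφ hL hR).φ j)) = ⨆ j, d (ψ j) (φ j) := by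
  show ⨆ j, (fun i => d (ψ i) (φ i)) ((Fintype.equivFin ι).symm j) = _
  rw [iSup, iSup]
  congr 1
  exact (Fintype.equivFin ι).symm.surjective.range_comp (fun i => d (ψ i) (φ i))

/-- There always exists a transport plan between two densities. -/
lemma nonempty_tplan {D : ℕ} {ρ σ : Matrix (Fin D) (Fin D) ℂ}
    (hρ : IsDensity ρ) (hσ : IsDensity σ) : Nonempty (TPlan D ρ σ) := by
  classical
  set hρH := hρ.1.1 with hdef1
  set hσH := hσ.1.1 with hdef2
  set μ := hρH.eigenvalues with hμ
  set ν := hσH.eigenvalues with hν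
  have hμnn : ∀ i, 0 ≤ μ i := fun i => hρ.1.eigenvalues_nonneg i
  have hνnn : ∀ i, 0 ≤ ν i := fun i => hσ.1.eigenvalues_nonneg i
  have hvψ : ∀ i, ‖hρH.eigenvectorBasis i‖ = 1 := fun i =>
    hρH.eigenvectorBasis.orthonormal.1 i
  have hvφ : ∀ i, ‖hσH.eigenvectorBasis i‖ = 1 := fun i =>
    hσH.eigenvectorBasis.orthonormal.1 i
  -- sums of positive eigenvalues are 1
  have hsumμ : ∑ i : {i // 0 < μ i}, (μ i.1 : ℂ) = 1 := by
    rw [sum_pos_subtype μ (fun i => (μ i : ℂ))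
      (fun i hi => by simp [le_antisymm (not_lt.mp hi) (hμnn i)])]
    have := congrArg Matrix.trace (density_sum hρH)
    rw [hρ.2] at this
    rw [← this]
    rw [Matrix.trace_sum]
    refine Finset.sum_congr rfl fun i _ => ?_
    rw [Matrix.trace_smul, trace_qproj (hvψ i), smul_eq_mul, mul_one]
  have hsumν : ∑ i : {i // 0 < ν i}, (ν i.1 : ℂ) = 1 := by
    rw [sum_pos_subtype ν (fun i => (ν i : ℂ))
      (fun i hi => by simp [le_antisymm (not_lt.mp hi) (hνnn i)])]
    have := congrArg Matrix.trace (density_sum hσH)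
    rw [hσ.2] at this
    rw [← this]
    rw [Matrix.trace_sum]
    refine Finset.sum_congr rfl fun i _ => ?_
    rw [Matrix.trace_smul, trace_qproj (hvφ i), smul_eq_mul, mul_one]
  refine ⟨TPlan.ofIndex (ι := {i // 0 < μ i} × {j // 0 < ν j})
    (fun x => μ x.1.1 * ν x.2.1)
    (fun x => hρH.eigenvectorBasis x.1.1) (fun x => hσH.eigenvectorBasis x.2.1)
    (fun x => mul_pos x.1.2 x.2.2) (fun x => hvψ _) (fun x => hvφ _) ?_ ?_⟩
  · rw [Fintype.sum_prod_type]
    have : ∀ i : {i // 0 < μ i},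
        ∑ j : {j // 0 < ν j}, ((μ i.1 * ν j.1 : ℝ) : ℂ) • qproj (hρH.eigenvectorBasis i.1)
          = (μ i.1 : ℂ) • qproj (hρH.eigenvectorBasis i.1) := by
      intro i
      rw [← Finset.sum_smul]
      congr 1
      push_cast
      rw [← Finset.mul_sum, hsumν, mul_one]
    rw [Finset.sum_congr rfl fun i _ => this i]
    rw [sum_pos_subtype μ (fun i => (μ i : ℂ) • qproj (hρH.eigenvectorBasis i))
      (fun i hi => by simp [le_antisymm (not_lt.mp hi) (hμnn i)])]
    exact density_sum hρH
  · rw [Fintype.sum_prod_type]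
    have : ∀ i : {i // 0 < μ i},
        ∑ j : {j // 0 < ν j}, ((μ i.1 * ν j.1 : ℝ) : ℂ) • qproj (hσH.eigenvectorBasis j.1)
          = (μ i.1 : ℂ) • ∑ j : {j // 0 < ν j}, (ν j.1 : ℂ) • qproj (hσH.eigenvectorBasis j.1) := by
      intro i
      rw [Finset.smul_sum]
      refine Finset.sum_congr rfl fun j _ => ?_
      rw [smul_smul]
      push_cast
      ring_nf
    rw [Finset.sum_congr rfl fun i _ => this i, ← Finset.sum_smul]
    have h2 : ∑ j : {j // 0 < ν j}, (ν j.1 : ℂ) • qproj (hσH.eigenvectorBasis j.1) = σ := by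
      rw [sum_pos_subtype ν (fun j => (ν j : ℂ) • qproj (hσH.eigenvectorBasis j))
        (fun j hj => by simp [le_antisymm (not_lt.mp hj) (hνnn j)])]
      exact density_sum hσH
    rw [h2, hsumμ, one_smul]

lemma marg_map {D : ℕ} {K : Type} [Fintype K] (a : K → ℝ) (ha : ∀ k, 0 ≤ a k)
    (U : K → Matrix (Fin D) (Fin D) ℂ) {n : ℕ} (q : Fin n → ℝ) (ψ : Fin n → QV D)
    {τ : Matrix (Fin D) (Fin D) ℂ} (hτ : ∑ j, (q j : ℂ) • qproj (ψ j) = τ) :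
    ∑ x : Fin n × {k // 0 < a k}, ((q x.1 * a x.2.1 : ℝ) : ℂ) • qproj (act (U x.2.1) (ψ x.1))
      = ∑ k, (a k : ℂ) • (U k * τ * (U k)ᴴ) := by
  classical
  rw [Fintype.sum_prod_type, Finset.sum_comm,
    ← sum_pos_subtype a (fun k => (a k : ℂ) • (U k * τ * (U k)ᴴ))
      (fun k hk => by simp [le_antisymm (not_lt.mp hk) (ha k)])]
  refine Finset.sum_congr rfl fun k _ => ?_
  have h1 : ∀ j, ((q j * a k.1 : ℝ) : ℂ) • qproj (act (U k.1) (ψ j))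
      = (a k.1 : ℂ) • (U k.1 * ((q j : ℂ) • qproj (ψ j)) * (U k.1)ᴴ) := by
    intro j
    rw [qproj_act, Matrix.mul_smul, Matrix.smul_mul, smul_smul]
    push_cast
    rw [mul_comm]
  rw [Finset.sum_congr rfl fun j _ => h1 j, ← Finset.smul_sum, ← Finset.sum_mul,
    ← Finset.mul_sum, hτ]

lemma ciSup_prod_fst {α β : Type*} [Fintype α] [Fintype β] [Nonempty β] (f : α → ℝ) :
    ⨆ x : α × β, f x.1 = ⨆ a, f a := by
  rcases isEmpty_or_nonempty α with h | h
  · rw [Real.iSup_of_isEmpty, Real.iSup_of_isEmpty]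
  · apply le_antisymm
    · exact ciSup_le fun x => le_ciSup (Set.Finite.bddAbove (Set.finite_range f)) x.1
    · exact ciSup_le fun a0 =>
        le_ciSup (f := fun x : α × β => f x.1)
          (Set.Finite.bddAbove (Set.finite_range _)) ((a0, Classical.arbitrary β) : α × β)

/-- Data processing for mixed-unitary channels built from symmetries of `d`. -/
theorem wasserstein_data_processing_mixed_unitary {D : ℕ} (d : QV D → QV D → ℝ)
    (hdnn : ∀ a b : QV D, 0 ≤ d a b)
    {K : Type} [Fintype K] (a : K → ℝ) (ha : ∀ k, 0 ≤ a k) (hasum : ∑ k, a k = 1)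
    (U : K → Matrix (Fin D) (Fin D) ℂ)
    (hU : ∀ k, U k ∈ Matrix.unitaryGroup (Fin D) ℂ)
    (hiso : ∀ k, ∀ ψ φ : QV D, ‖ψ‖ = 1 → ‖φ‖ = 1 →
        d (act (U k) ψ) (act (U k) φ) = d ψ φ)
    (ρ σ : Matrix (Fin D) (Fin D) ℂ) (hρ : IsDensity ρ) (hσ : IsDensity σ) :
    (∀ p : ℝ, 1 ≤ p →
      Wp d p (∑ k, (a k : ℂ) • (U k * ρ * (U k)ᴴ)) (∑ k, (a k : ℂ) • (U k * σ * (U k)ᴴ))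
        ≤ Wp d p ρ σ) ∧
    Winf d (∑ k, (a k : ℂ) • (U k * ρ * (U k)ᴴ)) (∑ k, (a k : ℂ) • (U k * σ * (U k)ᴴ))
      ≤ Winf d ρ σ := by
  classical
  have hKpos : Nonempty {k // 0 < a k} := by
    by_contra h
    rw [not_nonempty_iff] at h
    have : ∑ k, a k = 0 := Finset.sum_eq_zero fun k _ => by
      by_contra hk
      exact h.false ⟨k, lt_of_le_of_ne (ha k) (Ne.symm hk)⟩
    rw [hasum] at this
    norm_num at this
  have main : ∀ Q : TPlan D ρ σ,
      ∃ Q' : TPlan D (∑ k, (a k : ℂ) • (U k * ρ * (U k)ᴴ))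
        (∑ k, (a k : ℂ) • (U k * σ * (U k)ᴴ)),
        (∀ p : ℝ, Tcost d p Q' = Tcost d p Q) ∧
        (⨆ j, d (Q'.ψ j) (Q'.φ j)) = ⨆ j, d (Q.ψ j) (Q.φ j) := by
    intro Q
    have hsub : ∑ k : {k // 0 < a k}, a k.1 = 1 := by
      rw [sum_pos_subtype a (fun k => a k)
        (fun k hk => le_antisymm (not_lt.mp hk) (ha k))]
      exact hasum
    refine ⟨TPlan.ofIndex (ι := Fin Q.n × {k // 0 < a k})
      (fun x => Q.q x.1 * a x.2.1)
      (fun x => act (U x.2.1) (Q.ψ x.1)) (fun x => act (U x.2.1) (Q.φ x.1))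
      (fun x => mul_pos (Q.q_pos x.1) x.2.2)
      (fun x => by rw [norm_act (hU _)]; exact Q.ψ_unit x.1)
      (fun x => by rw [norm_act (hU _)]; exact Q.φ_unit x.1)
      (marg_map a ha U Q.q Q.ψ Q.margL) (marg_map a ha U Q.q Q.φ Q.margR), ?_, ?_⟩
    · intro p
      rw [Tcost_ofIndex]
      show _ = ∑ j, Q.q j * d (Q.ψ j) (Q.φ j) ^ p
      rw [Fintype.sum_prod_type]
      refine Finset.sum_congr rfl fun j _ => ?_
      have h1 : ∀ k : {k // 0 < a k},
          Q.q j * a k.1 * d (act (U k.1) (Q.ψ j)) (act (U k.1) (Q.φ j)) ^ p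
            = a k.1 * (Q.q j * d (Q.ψ j) (Q.φ j) ^ p) := by
        intro k
        rw [hiso k.1 _ _ (Q.ψ_unit j) (Q.φ_unit j)]
        ring
      rw [Finset.sum_congr rfl fun k _ => h1 k, ← Finset.sum_mul, hsub, one_mul]
    · rw [iSup_ofIndex]
      have h2 : ∀ x : Fin Q.n × {k // 0 < a k},
          d (act (U x.2.1) (Q.ψ x.1)) (act (U x.2.1) (Q.φ x.1)) = d (Q.ψ x.1) (Q.φ x.1) :=
        fun x => hiso _ _ _ (Q.ψ_unit _) (Q.φ_unit _)
      rw [iSup_congr h2]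
      exact ciSup_prod_fst (fun j => d (Q.ψ j) (Q.φ j))
  constructor
  · intro p hp
    apply csInf_le_csInf
    · refine ⟨0, fun x hx => ?_⟩
      obtain ⟨Q, rfl⟩ := hx
      exact Real.rpow_nonneg (Finset.sum_nonneg fun j _ =>
        mul_nonneg (Q.q_pos j).le (Real.rpow_nonneg (hdnn _ _) p)) _
    · obtain ⟨Q⟩ := nonempty_tplan hρ hσ
      exact ⟨_, Q, rfl⟩
    · rintro x ⟨Q, rfl⟩
      obtain ⟨Q', hc, -⟩ := main Q
      exact ⟨Q', by rw [hc p]⟩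
  · apply csInf_le_csInf
    · refine ⟨0, fun x hx => ?_⟩
      obtain ⟨Q, rfl⟩ := hx
      exact Real.iSup_nonneg fun j => hdnn _ _
    · obtain ⟨Q⟩ := nonempty_tplan hρ hσ
      exact ⟨_, Q, rfl⟩
    · rintro x ⟨Q, rfl⟩
      obtain ⟨Q', -, hs⟩ := main Q
      exact ⟨Q', hs.symm⟩
end
end

section
/- (Hypercontractivity of depolarizing/replacement noise for transport costs.) Let q_j > 0 with Σq_j = 1 and costs 0 ≤ A_j ≤ D (D = diam of the metric space), with Σ_j q_j A_j^{p₁} = M^{p₁} for 1 ≤ p₁ < p₂ < ∞. Then Σ_j q_j A_j^{p₂} ≤ (M/D)^{p₁} D^{p₂}, and hence (Σ_j q_j A_j^{p₁})^{1/p₁} / (Σ_j q_j A_j^{p₂})^{1/p₂} ≥ (M/D)^{1 − p₁/p₂}. Consequently, if 1 − δ ≤ (M/D)^{p₂−p₁} and Q' is obtained from an optimal p₁-plan Q by scaling it by (1−δ) and adding zero-cost elements of total mass δ, then T_{p₂}(Q')^{1/p₂} = (1−δ)^{1/p₂} T_{p₂}(Q)^{1/p₂} ≤ T_{p₁}(Q)^{1/p₁}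 = M. -/
open scoped BigOperators

/-- Hypercontractivity of replacement/depolarizing noise for transport costs:
the extremal bound `Σ q A^{p₂} ≤ (M/D)^{p₁} D^{p₂}`, the resulting ratio bound,
and the conclusion for the noisy plan. -/
theorem transport_hypercontractivity {J : Type} [Fintype J] (q A : J → ℝ)
    (hq : ∀ j, 0 < q j) (hqsum : ∑ j, q j = 1)
    (Dd M p₁ p₂ δ : ℝ) (hD : 0 < Dd) (hM : 0 ≤ M)
    (hA : ∀ j, A j ∈ Set.Icc (0 : ℝ) Dd)
    (hmean : ∑ j, q j * A j ^ p₁ = M ^ p₁)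
    (hp₁ : 1 ≤ p₁) (hpp : p₁ < p₂)
    (hδ0 : 0 ≤ δ) (hδ1 : δ ≤ 1) :
    (∑ j, q j * A j ^ p₂ ≤ (M / Dd) ^ p₁ * Dd ^ p₂) ∧
    ((M / Dd) ^ (1 - p₁ / p₂) ≤
      (∑ j, q j * A j ^ p₁) ^ (1 / p₁) / (∑ j, q j * A j ^ p₂) ^ (1 / p₂)) ∧
    (1 - δ ≤ (M / Dd) ^ (p₂ - p₁) →
      ((1 - δ) * ∑ j, q j * A j ^ p₂) ^ (1 / p₂) ≤ M) := by
  have hp₁0 : (0:ℝ) < p₁ := lt_of_lt_of_le one_pos hp₁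
  have hp₂0 : (0:ℝ) < p₂ := hp₁0.trans hpp
  have hAnn : ∀ j, 0 ≤ A j := fun j => (hA j).1
  have hAD : ∀ j, A j ≤ Dd := fun j => (hA j).2
  have hMD : 0 ≤ M / Dd := div_nonneg hM hD.le
  have hS₂nn : 0 ≤ ∑ j, q j * A j ^ p₂ :=
    Finset.sum_nonneg fun j _ => mul_nonneg (hq j).le (Real.rpow_nonneg (hAnn j) _)
  -- Part 1
  have key : ∀ j, A j ^ p₂ ≤ A j ^ p₁ * Dd ^ (p₂ - p₁) := by
    intro j
    have h1 : A j ^ p₂ = A j ^ p₁ * A j ^ (p₂ - p₁) := by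
      rw [← Real.rpow_add_of_nonneg (hAnn j) hp₁0.le (by linarith)]
      ring_nf
    rw [h1]
    exact mul_le_mul_of_nonneg_left
      (Real.rpow_le_rpow (hAnn j) (hAD j) (by linarith)) (Real.rpow_nonneg (hAnn j) _)
  have part1' : ∑ j, q j * A j ^ p₂ ≤ M ^ p₁ * Dd ^ (p₂ - p₁) := by
    calc ∑ j, q j * A j ^ p₂ ≤ ∑ j, q j * (A j ^ p₁ * Dd ^ (p₂ - p₁)) :=
          Finset.sum_le_sum fun j _ => mul_le_mul_of_nonneg_left (key j) (hq j).le
      _ = (∑ j, q j * A j ^ p₁) * Dd ^ (p₂ - p₁) := by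
          rw [Finset.sum_mul]; congr 1; ext j; ring
      _ = M ^ p₁ * Dd ^ (p₂ - p₁) := by rw [hmean]
  have hRHS : (M / Dd) ^ p₁ * Dd ^ p₂ = M ^ p₁ * Dd ^ (p₂ - p₁) := by
    rw [Real.div_rpow hM hD.le, Real.rpow_sub hD]
    ring
  have part1 : ∑ j, q j * A j ^ p₂ ≤ (M / Dd) ^ p₁ * Dd ^ p₂ := by
    rw [hRHS]; exact part1'
  refine ⟨part1, ?_, ?_⟩
  · -- Part 2
    by_cases hM0 : M = 0
    · have hA0 : ∀ j, A j = 0 := by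
        intro j
        by_contra h
        have hj : 0 < A j := (hAnn j).lt_of_ne (Ne.symm h)
        have hpos : 0 < ∑ i, q i * A i ^ p₁ :=
          Finset.sum_pos' (fun i _ => mul_nonneg (hq i).le (Real.rpow_nonneg (hAnn i) _))
            ⟨j, Finset.mem_univ j, mul_pos (hq j) (Real.rpow_pos_of_pos hj _)⟩
        rw [hmean, hM0, Real.zero_rpow hp₁0.ne'] at hpos
        exact lt_irrefl 0 hpos
      have hexp : (0:ℝ) < 1 - p₁ / p₂ := by
        have : p₁ / p₂ < 1 := (div_lt_one hp₂0).2 hpp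
        linarith
      simp only [hA0, Real.zero_rpow hp₁0.ne', Real.zero_rpow hp₂0.ne', mul_zero,
        Finset.sum_const_zero, hM0, zero_div]
      rw [Real.zero_rpow hexp.ne', Real.zero_rpow (by positivity : (1:ℝ)/p₁ ≠ 0)]
      simp
    · have hMpos : 0 < M := hM.lt_of_ne (Ne.symm hM0)
      have hS₁ : (∑ j, q j * A j ^ p₁) ^ (1/p₁) = M := by
        rw [hmean, ← Real.rpow_mul hM, mul_one_div_cancel hp₁0.ne', Real.rpow_one]
      obtain ⟨j, hj⟩ : ∃ j, 0 < A j := by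
        by_contra hc
        push_neg at hc
        have hz : ∀ j, A j = 0 := fun j => le_antisymm (hc j) (hAnn j)
        have : (0:ℝ) = M ^ p₁ := by
          rw [← hmean]; simp [hz, Real.zero_rpow hp₁0.ne']
        exact absurd this.symm (ne_of_gt (Real.rpow_pos_of_pos hMpos _))
      have hS₂pos : 0 < ∑ j, q j * A j ^ p₂ :=
        Finset.sum_pos' (fun i _ => mul_nonneg (hq i).le (Real.rpow_nonneg (hAnn i) _))
          ⟨j, Finset.mem_univ j, mul_pos (hq j) (Real.rpow_pos_of_pos hj _)⟩
      have hden : 0 < (∑ j, q j * A j ^ p₂) ^ (1/p₂) := Real.rpow_pos_of_pos hS₂pos _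
      rw [hS₁, le_div_iff₀ hden]
      have hub : (∑ j, q j * A j ^ p₂)^(1/p₂) ≤ (M/Dd)^(p₁/p₂) * Dd := by
        calc (∑ j, q j * A j ^ p₂)^(1/p₂)
            ≤ ((M/Dd)^p₁ * Dd^p₂)^(1/p₂) :=
              Real.rpow_le_rpow hS₂nn part1 (by positivity)
          _ = (M/Dd)^(p₁/p₂) * Dd := by
              rw [Real.mul_rpow (Real.rpow_nonneg hMD _) (Real.rpow_nonneg hD.le _),
                ← Real.rpow_mul hMD, ← Real.rpow_mul hD.le,
                mul_one_div_cancel hp₂0.ne', Real.rpow_one, mul_one_div]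
      calc (M/Dd)^(1-p₁/p₂) * (∑ j, q j * A j ^ p₂)^(1/p₂)
          ≤ (M/Dd)^(1-p₁/p₂) * ((M/Dd)^(p₁/p₂) * Dd) :=
            mul_le_mul_of_nonneg_left hub (Real.rpow_nonneg hMD _)
        _ = M := by
            rw [← mul_assoc, ← Real.rpow_add (div_pos hMpos hD), sub_add_cancel,
              Real.rpow_one, div_mul_cancel₀ _ hD.ne']
  · -- Part 3
    intro h
    have h2 : (1-δ) * ∑ j, q j * A j ^ p₂ ≤ M ^ p₂ := by
      calc (1-δ) * ∑ j, q j * A j ^ p₂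
          ≤ (M/Dd)^(p₂-p₁) * ((M/Dd)^p₁ * Dd^p₂) :=
            mul_le_mul h part1 hS₂nn (Real.rpow_nonneg hMD _)
        _ = M ^ p₂ := by
            rw [← mul_assoc, ← Real.rpow_add_of_nonneg hMD (by linarith) hp₁0.le,
              sub_add_cancel, Real.div_rpow hM hD.le,
              div_mul_cancel₀ _ (by positivity : Dd ^ p₂ ≠ 0)]
    calc ((1-δ) * ∑ j, q j * A j ^ p₂)^(1/p₂)
        ≤ (M^p₂)^(1/p₂) :=
          Real.rpow_le_rpow (mul_nonneg (by linarith) hS₂nn) h2 (by positivity)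
      _ = M := by
          rw [← Real.rpow_mul hM, mul_one_div_cancel hp₂0.ne', Real.rpow_one]
end

section
/- Let ρ = |ψ⁺⟩⟨ψ⁺| be a two-qubit Bell state with both single-qubit marginals maximally mixed. For the asymmetric-projector transport cost on two qubits, T(ρ,ρ) = Σ_{i=1}^{2} Tr[(ρ⊗ρ) P_{i,asym}] = 1/2 > 0, where P_{i,asym} projects the i-th qubit pair onto the antisymmetric subspace; in particular the only coupling of a pure state with itself is the product state, and Tr[(I/2 ⊗ I/2) P_asym(2)] = 1/4. -/
open scoped BigOperators ComplexOrder Kronecker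
open Matrix

noncomputable section

/-- Index type of the two-qubit Hilbert space `ℂ² ⊗ ℂ²`. -/
abbrev H2 := Fin 2 × Fin 2

/-- The Bell state `|ψ⁺⟩ = (|00⟩ + |11⟩)/√2`. -/
def bell : H2 → ℂ := fun x => if x.1 = x.2 then ((Real.sqrt 2)⁻¹ : ℝ) else 0

/-- Rank-one projection `|ψ⟩⟨ψ|` for a vector on a general index type. -/
def gproj {ι : Type*} (ψ : ι → ℂ) : Matrix ι ι ℂ :=
  Matrix.of fun i j => ψ i * (starRingEnd ℂ) (ψ j)

/-- The flip (swap) operator `𝔽` on `ℂ² ⊗ ℂ²`. -/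
def flipOp : Matrix H2 H2 ℂ :=
  Matrix.of fun a b => if a.1 = b.2 ∧ a.2 = b.1 then 1 else 0

/-- The projector onto the antisymmetric subspace, `P_asym = (I − 𝔽)/2`. -/
def Pasym : Matrix H2 H2 ℂ := (2 : ℂ)⁻¹ • (1 - flipOp)

/-- `P_{1,asym}`: antisymmetric projector on the pair formed by the first qubit
of each copy, identity elsewhere.  The total space `H ⊗ H` is indexed by
`H2 × H2 = (first copy, second copy)`. -/
def P1 : Matrix (H2 × H2) (H2 × H2) ℂ :=
  Matrix.of fun x y => Pasym (x.1.1, x.2.1) (y.1.1, y.2.1) *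
    (if x.1.2 = y.1.2 ∧ x.2.2 = y.2.2 then 1 else 0)

/-- `P_{2,asym}`: antisymmetric projector on the pair formed by the second qubit
of each copy. -/
def P2 : Matrix (H2 × H2) (H2 × H2) ℂ :=
  Matrix.of fun x y => Pasym (x.1.2, x.2.2) (y.1.2, y.2.2) *
    (if x.1.1 = y.1.1 ∧ x.2.1 = y.2.1 then 1 else 0)

/-- Partial trace over the first tensor factor. -/
def ptraceFirst {ι : Type*} [Fintype ι] (τ : Matrix (ι × ι) (ι × ι) ℂ) :
    Matrix ι ι ℂ :=
  Matrix.of fun a b => ∑ c, τ (c, a) (c, b)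

/-- Partial trace over the second tensor factor. -/
def ptraceSecond {ι : Type*} [Fintype ι] (τ : Matrix (ι × ι) (ι × ι) ℂ) :
    Matrix ι ι ℂ :=
  Matrix.of fun a b => ∑ c, τ (a, c) (b, c)


lemma trace_ct_mul_self_zero {m n : Type*} [Fintype m] [Fintype n] {A : Matrix m n ℂ}
    (h : (Aᴴ * A).trace = 0) : A = 0 := by
  have h2 : (Aᴴ * A).trace = ((∑ j, ∑ i, Complex.normSq (A i j) : ℝ) : ℂ) := by
    simp [Matrix.trace, Matrix.mul_apply, Matrix.diag, Matrix.conjTranspose_apply,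
      Complex.normSq_eq_conj_mul_self]
  rw [h] at h2
  have h' : ∑ j, ∑ i, Complex.normSq (A i j) = 0 := by exact_mod_cast h2.symm
  ext i j
  have hj := (Finset.sum_eq_zero_iff_of_nonneg (fun j _ => Finset.sum_nonneg
    (fun i _ => Complex.normSq_nonneg _))).mp h' j (Finset.mem_univ j)
  have hi := (Finset.sum_eq_zero_iff_of_nonneg
    (fun i _ => Complex.normSq_nonneg _)).mp hj i (Finset.mem_univ i)
  simpa using Complex.normSq_eq_zero.mp hi

open scoped MatrixOrder in
lemma psd_mul_psd_trace_zero {n : Type*} [Fintype n] [DecidableEq n]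
    {A B : Matrix n n ℂ} (hA : A.PosSemidef) (hB : B.PosSemidef)
    (h : (A * B).trace = 0) : A * B = 0 := by
  set S := CFC.sqrt A with hSdef
  set R := CFC.sqrt B with hRdef
  have hS : S * S = A := CFC.sqrt_mul_sqrt_self A hA.nonneg
  have hR : R * R = B := CFC.sqrt_mul_sqrt_self B hB.nonneg
  have hSh : Sᴴ = S := (CFC.sqrt_nonneg A).posSemidef.1
  have hRh : Rᴴ = R := (CFC.sqrt_nonneg B).posSemidef.1
  have key : ((R * S)ᴴ * (R * S)).trace = 0 := by
    rw [conjTranspose_mul, hSh, hRh]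
    calc (S * R * (R * S)).trace = ((S * R * R) * S).trace := by
          simp only [mul_assoc]
    _ = (S * (S * R * R)).trace := (trace_mul_comm _ _).symm
    _ = (A * B).trace := by rw [← hS, ← hR]; simp only [mul_assoc]
    _ = 0 := h
  have hRS : R * S = 0 := trace_ct_mul_self_zero key
  have hBS : B * S = 0 := by rw [← hR, mul_assoc, hRS, mul_zero]
  have hBA : B * A = 0 := by rw [← hS, ← mul_assoc, hBS, zero_mul]
  calc A * B = (B * A)ᴴ := by rw [conjTranspose_mul, hA.1, hB.1]
  _ = 0 := by rw [hBA, conjTranspose_zero]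

lemma kron_ct {κ₁ κ₂ : Type*} (A : Matrix κ₁ κ₁ ℂ) (B : Matrix κ₂ κ₂ ℂ) :
    (A ⊗ₖ B)ᴴ = Aᴴ ⊗ₖ Bᴴ := by
  ext x y
  simp only [Matrix.conjTranspose_apply, Matrix.kroneckerMap_apply]
  exact RingHom.map_mul (starRingEnd ℂ) _ _

lemma coupling_eq_product (ι : Type) [Fintype ι] [DecidableEq ι] (ψ : ι → ℂ)
    (hψ : ∑ i, ‖ψ i‖ ^ 2 = 1)
    (τ : Matrix (ι × ι) (ι × ι) ℂ) (hτ : τ.PosSemidef) (htr : τ.trace = 1)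
    (hm2 : ptraceSecond τ = gproj ψ) (hm1 : ptraceFirst τ = gproj ψ) :
    τ = gproj ψ ⊗ₖ gproj ψ := by
  classical
  have hψ' : ∑ i, (starRingEnd ℂ) (ψ i) * ψ i = 1 := by
    have h0 : ∑ i, Complex.normSq (ψ i) = 1 := by
      rw [← hψ]; exact Finset.sum_congr rfl fun i _ => (Complex.sq_norm _).symm
    calc ∑ i, (starRingEnd ℂ) (ψ i) * ψ i
        = ∑ i, ((Complex.normSq (ψ i) : ℝ) : ℂ) :=
          Finset.sum_congr rfl fun i _ => Complex.normSq_eq_conj_mul_self.symm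
    _ = ((∑ i, Complex.normSq (ψ i) : ℝ) : ℂ) := by push_cast; rfl
    _ = 1 := by rw [h0]; norm_num
  set P := gproj ψ with hPdef
  have hPh : Pᴴ = P := by
    ext i j
    simp [hPdef, gproj, Matrix.conjTranspose_apply, mul_comm]
  have hPP : P * P = P := by
    ext i j
    simp only [hPdef, gproj, Matrix.mul_apply, Matrix.of_apply]
    calc ∑ k, ψ i * (starRingEnd ℂ) (ψ k) * (ψ k * (starRingEnd ℂ) (ψ j))
        = (ψ i * (starRingEnd ℂ) (ψ j)) * ∑ k, (starRingEnd ℂ) (ψ k) * ψ k := by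
          rw [Finset.mul_sum]; exact Finset.sum_congr rfl fun k _ => by ring
    _ = ψ i * (starRingEnd ℂ) (ψ j) := by rw [hψ', mul_one]
  have htrP : P.trace = 1 := by
    simpa [hPdef, gproj, Matrix.trace, Matrix.diag, mul_comm] using hψ'
  have hm2' : ∀ a b, ∑ c, τ (a, c) (b, c) = P a b := fun a b => by
    rw [show (∑ c, τ (a, c) (b, c)) = ptraceSecond τ a b from rfl, hm2]
  have hm1' : ∀ a b, ∑ c, τ (c, a) (c, b) = P a b := fun a b => by
    rw [show (∑ c, τ (c, a) (c, b)) = ptraceFirst τ a b from rfl, hm1]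
  set M : Matrix (ι × ι) (ι × ι) ℂ := P ⊗ₖ 1 with hMdef
  set N : Matrix (ι × ι) (ι × ι) ℂ := 1 ⊗ₖ P with hNdef
  have hMh : Mᴴ = M := by
    rw [hMdef, kron_ct, hPh, Matrix.conjTranspose_one]
  have hNh : Nᴴ = N := by
    rw [hNdef, kron_ct, hPh, Matrix.conjTranspose_one]
  have hMM : M * M = M := by
    rw [hMdef, ← Matrix.mul_kronecker_mul, hPP, Matrix.one_mul]
  have hNN : N * N = N := by
    rw [hNdef, ← Matrix.mul_kronecker_mul, hPP, Matrix.one_mul]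
  have htrM : (τ * M).trace = 1 := by
    calc (τ * M).trace
        = ∑ x : ι × ι, ∑ y : ι × ι,
            τ x y * (P y.1 x.1 * (if y.2 = x.2 then (1:ℂ) else 0)) := by
          simp [Matrix.trace, Matrix.diag, Matrix.mul_apply, hMdef,
            Matrix.kroneckerMap_apply, Matrix.one_apply]
    _ = ∑ x1, ∑ x2, ∑ y1, τ (x1, x2) (y1, x2) * P y1 x1 := by
          rw [Fintype.sum_prod_type]
          refine Finset.sum_congr rfl fun x1 _ => Finset.sum_congr rfl fun x2 _ => ?_
          rw [Fintype.sum_prod_type]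
          refine Finset.sum_congr rfl fun y1 _ => ?_
          simp [mul_ite]
    _ = ∑ x1, ∑ y1, (∑ x2, τ (x1, x2) (y1, x2)) * P y1 x1 := by
          refine Finset.sum_congr rfl fun x1 _ => ?_
          rw [Finset.sum_comm]
          exact Finset.sum_congr rfl fun y1 _ => (Finset.sum_mul _ _ _).symm
    _ = ∑ x1, ∑ y1, P x1 y1 * P y1 x1 := by
          exact Finset.sum_congr rfl fun x1 _ => Finset.sum_congr rfl fun y1 _ => by
            rw [hm2']
    _ = (P * P).trace := by simp [Matrix.trace, Matrix.diag, Matrix.mul_apply]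
    _ = 1 := by rw [hPP, htrP]
  have htrN : (τ * N).trace = 1 := by
    calc (τ * N).trace
        = ∑ x : ι × ι, ∑ y : ι × ι,
            τ x y * ((if y.1 = x.1 then (1:ℂ) else 0) * P y.2 x.2) := by
          simp [Matrix.trace, Matrix.diag, Matrix.mul_apply, hNdef,
            Matrix.kroneckerMap_apply, Matrix.one_apply]
    _ = ∑ x1, ∑ x2, ∑ y2, τ (x1, x2) (x1, y2) * P y2 x2 := by
          rw [Fintype.sum_prod_type]
          refine Finset.sum_congr rfl fun x1 _ => Finset.sum_congr rfl fun x2 _ => ?_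
          rw [Fintype.sum_prod_type]
          simp [ite_mul, mul_ite]
    _ = ∑ x2, ∑ y2, (∑ x1, τ (x1, x2) (x1, y2)) * P y2 x2 := by
          rw [Finset.sum_comm]
          refine Finset.sum_congr rfl fun x2 _ => ?_
          rw [Finset.sum_comm]
          exact Finset.sum_congr rfl fun y2 _ => (Finset.sum_mul _ _ _).symm
    _ = ∑ x2, ∑ y2, P x2 y2 * P y2 x2 := by
          exact Finset.sum_congr rfl fun x2 _ => Finset.sum_congr rfl fun y2 _ => by
            rw [hm1']
    _ = (P * P).trace := by simp [Matrix.trace, Matrix.diag, Matrix.mul_apply]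
    _ = 1 := by rw [hPP, htrP]
  have hQM : (1 - M).PosSemidef := by
    have hq : (1 - M) = (1 - M)ᴴ * (1 - M) := by
      rw [Matrix.conjTranspose_sub, hMh, Matrix.conjTranspose_one]
      rw [Matrix.sub_mul, Matrix.mul_sub, Matrix.mul_sub, hMM]
      simp
    rw [hq]; exact Matrix.posSemidef_conjTranspose_mul_self _
  have hQN : (1 - N).PosSemidef := by
    have hq : (1 - N) = (1 - N)ᴴ * (1 - N) := by
      rw [Matrix.conjTranspose_sub, hNh, Matrix.conjTranspose_one]
      rw [Matrix.sub_mul, Matrix.mul_sub, Matrix.mul_sub, hNN]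
      simp
    rw [hq]; exact Matrix.posSemidef_conjTranspose_mul_self _
  have hτM : τ * (1 - M) = 0 := by
    apply psd_mul_psd_trace_zero hτ hQM
    rw [Matrix.mul_sub, Matrix.mul_one, Matrix.trace_sub, htr, htrM, sub_self]
  have hτN : τ * (1 - N) = 0 := by
    apply psd_mul_psd_trace_zero hτ hQN
    rw [Matrix.mul_sub, Matrix.mul_one, Matrix.trace_sub, htr, htrN, sub_self]
  have h2 : τ = τ * M := by
    have := hτM; rw [Matrix.mul_sub, Matrix.mul_one, sub_eq_zero] at this; exact this
  have h4 : τ = τ * N := by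
    have := hτN; rw [Matrix.mul_sub, Matrix.mul_one, sub_eq_zero] at this; exact this
  have h1 : τ = M * τ := by
    have := congrArg Matrix.conjTranspose h2
    rwa [Matrix.conjTranspose_mul, hMh, hτ.1] at this
  have h3 : τ = N * τ := by
    have := congrArg Matrix.conjTranspose h4
    rwa [Matrix.conjTranspose_mul, hNh, hτ.1] at this
  set R : Matrix (ι × ι) (ι × ι) ℂ := P ⊗ₖ P with hRdef
  have hMN : M * N = R := by
    rw [hMdef, hNdef, ← Matrix.mul_kronecker_mul, Matrix.mul_one, Matrix.one_mul]
  have hτRR : τ = R * τ * R := by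
    calc τ = M * τ * N := by rw [← h1, ← h4]
    _ = M * (N * τ * M) * N := by rw [← h3, ← h2]
    _ = (M * N) * τ * (M * N) := by simp only [mul_assoc]
    _ = R * τ * R := by rw [hMN]
  set u : ι × ι → ℂ := fun x => ψ x.1 * ψ x.2 with hudef
  have hRu : R = gproj u := by
    ext x y
    simp only [hRdef, hPdef, gproj, Matrix.kroneckerMap_apply, Matrix.of_apply, hudef]
    rw [RingHom.map_mul (starRingEnd ℂ)]
    ring
  have hu1 : ∑ x, u x * (starRingEnd ℂ) (u x) = 1 := by
    rw [Fintype.sum_prod_type]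
    have : ∀ a : ι, ∑ b, u (a, b) * (starRingEnd ℂ) (u (a, b))
        = (ψ a * (starRingEnd ℂ) (ψ a)) * ∑ b, (starRingEnd ℂ) (ψ b) * ψ b := by
      intro a
      rw [Finset.mul_sum]
      exact Finset.sum_congr rfl fun b _ => by
        simp only [hudef]
        rw [RingHom.map_mul (starRingEnd ℂ)]
        ring
    simp_rw [this, hψ', mul_one]
    simpa [mul_comm] using hψ'
  set S : ℂ := ∑ x, ∑ y, (starRingEnd ℂ) (u x) * τ x y * u y with hSdef
  have hEntry : ∀ i j, τ i j = u i * (starRingEnd ℂ) (u j) * S := by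
    intro i j
    conv_lhs => rw [hτRR, hRu]
    simp only [Matrix.mul_apply, gproj, Matrix.of_apply, hSdef,
      Finset.sum_mul, Finset.mul_sum]
    rw [Finset.sum_comm]
    apply Finset.sum_congr rfl; intro y _
    apply Finset.sum_congr rfl; intro x _
    ring
  have hS1 : S = 1 := by
    have : τ.trace = S := by
      simp only [Matrix.trace, Matrix.diag]
      calc ∑ i, τ i i = ∑ i, u i * (starRingEnd ℂ) (u i) * S := by
            exact Finset.sum_congr rfl fun i _ => hEntry i i
      _ = (∑ i, u i * (starRingEnd ℂ) (u i)) * S := by rw [Finset.sum_mul]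
      _ = S := by rw [hu1, one_mul]
    rw [← this, htr]
  ext x y
  rw [hEntry x y, hS1, mul_one, hRu]
  rfl

lemma gb : gproj bell = Matrix.of fun i j =>
    if i.1 = i.2 ∧ j.1 = j.2 then (1/2 : ℂ) else 0 := by
  have h2 : ((Real.sqrt 2 : ℝ) : ℂ)⁻¹ * ((Real.sqrt 2 : ℝ) : ℂ)⁻¹ = 1/2 := by
    rw [← mul_inv, ← Complex.ofReal_mul, Real.mul_self_sqrt (by norm_num)]
    norm_num
  ext i j
  simp only [gproj, bell, Matrix.of_apply]
  by_cases hi : i.1 = i.2 <;> by_cases hj : j.1 = j.2 <;>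
    simp [hi, hj, Complex.conj_ofReal, h2]

lemma part1_cost : ((gproj bell ⊗ₖ gproj bell) * (P1 + P2)).trace = 1 / 2 := by
  rw [gb]
  simp only [Matrix.trace, Matrix.diag, Matrix.mul_apply, Matrix.add_apply,
    Matrix.kroneckerMap_apply, P1, P2, Pasym, flipOp, Matrix.smul_apply,
    Matrix.sub_apply, Matrix.one_apply, Matrix.of_apply, Fintype.sum_prod_type,
    smul_eq_mul]
  norm_num [Fin.sum_univ_succ]

lemma part3_cost : (((((2 : ℂ)⁻¹ • (1 : Matrix (Fin 2) (Fin 2) ℂ)) ⊗ₖ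
    ((2 : ℂ)⁻¹ • (1 : Matrix (Fin 2) (Fin 2) ℂ))) * Pasym).trace = 1 / 4) := by
  simp only [Matrix.trace, Matrix.diag, Matrix.mul_apply, Matrix.kroneckerMap_apply,
    Pasym, flipOp, Matrix.smul_apply, Matrix.sub_apply, Matrix.one_apply, Matrix.of_apply,
    Fintype.sum_prod_type]
  norm_num [Fin.sum_univ_succ]

/-- For the Bell state `ρ = |ψ⁺⟩⟨ψ⁺|`, the asymmetric-projector transport cost of
the (unique) self-coupling is `1/2 > 0`; the only coupling of a pure state with
itself is the product state; and `Tr[(I/2 ⊗ I/2)P_asym] = 1/4`. -/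
theorem bell_asymmetric_self_cost :
    ((gproj bell ⊗ₖ gproj bell) * (P1 + P2)).trace = 1 / 2 ∧
    (∀ (ι : Type) [Fintype ι] [DecidableEq ι] (ψ : ι → ℂ),
      (∑ i, ‖ψ i‖ ^ 2 = 1) →
      ∀ τ : Matrix (ι × ι) (ι × ι) ℂ, τ.PosSemidef → τ.trace = 1 →
        ptraceSecond τ = gproj ψ → ptraceFirst τ = gproj ψ →
        τ = gproj ψ ⊗ₖ gproj ψ) ∧
    (((((2 : ℂ)⁻¹ • (1 : Matrix (Fin 2) (Fin 2) ℂ)) ⊗ₖ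
        ((2 : ℂ)⁻¹ • (1 : Matrix (Fin 2) (Fin 2) ℂ))) * Pasym).trace = 1 / 4) := by
  exact ⟨part1_cost, fun ι _ _ ψ hψ τ hτ htr hm2 hm1 =>
    coupling_eq_product ι ψ hψ τ hτ htr hm2 hm1, part3_cost⟩
end
end
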